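/- arXiv:2106.10007 — 2 statements merged into one kernel-verified Lean document; each statement's English description precedes it below -/
import Mathlib

section
/- Let (B0, B1, B2) have the multinomial distribution with parameters t and (p0, p1, p2), where p0, p1, p2 > 0 and p := p0 + p1 + p2 < 1; set M1 = B1 + B0, M2 = B2 + B0. Then for (r, s) = (1, 2) or (2, 1) and every integer i with 0 ≤ i ≤ t and P(M_r = i) > 0, the conditional expectation is linear in i: E[M_s | M_r = i] = t·p_s/(1 − p0 − p_r) + i·(p0/(p0 + p_r) − p_s/(1 − p0 − p_r)). -/
open MeasureTheory ProbabilityTheory Finset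

/-- `(B0, B1, B2)` has the multinomial distribution with parameters `t` and `(p0, p1, p2)`. -/
def IsMultinomial {Ω : Type*} [MeasureSpace Ω] (t : ℕ) (p0 p1 p2 : ℝ)
    (B0 B1 B2 : Ω → ℕ) : Prop :=
  Measurable B0 ∧ Measurable B1 ∧ Measurable B2 ∧
  ∀ b0 b1 b2 : ℕ,
    (ℙ {ω | B0 ω = b0 ∧ B1 ω = b1 ∧ B2 ω = b2}).toReal =
      if b0 + b1 + b2 ≤ t then
        (Nat.factorial t : ℝ) /
          ((Nat.factorial b0 : ℝ) * (Nat.factorial b1 : ℝ) * (Nat.factorial b2 : ℝ) *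
            (Nat.factorial (t - (b0 + b1 + b2)) : ℝ)) *
          (p0 ^ b0 * p1 ^ b1 * p2 ^ b2 * (1 - (p0 + p1 + p2)) ^ (t - (b0 + b1 + b2)))
      else 0

lemma binom_sum (x y : ℝ) (n : ℕ) :
    ∑ k ∈ range (n+1), (n.choose k : ℝ) * x^k * y^(n-k) = (x+y)^n := by
  rw [add_pow]
  exact Finset.sum_congr rfl fun k _ => by ring

lemma binom_first_moment (x y : ℝ) (n : ℕ) :
    ∑ k ∈ range (n+1), (k : ℝ) * (n.choose k : ℝ) * x^k * y^(n-k)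
      = n * x * (x+y)^(n-1) := by
  cases n with
  | zero => simp
  | succ m =>
    rw [Finset.sum_range_succ']
    have h : ∀ j ∈ range (m+1),
        ((j+1 : ℕ) : ℝ) * ((m+1).choose (j+1) : ℝ) * x^(j+1) * y^(m+1-(j+1))
          = ((m:ℝ)+1) * x * ((m.choose j : ℝ) * x^j * y^(m-j)) := by
      intro j _
      have hc : ((m+1) * m.choose j : ℕ) = ((m+1).choose (j+1) * (j+1) : ℕ) :=
        Nat.add_one_mul_choose_eq m j
      have hc' : ((m:ℝ)+1) * (m.choose j : ℝ) = ((m+1).choose (j+1) : ℝ) * ((j:ℝ)+1) := by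
        exact_mod_cast congrArg (Nat.cast : ℕ → ℝ) hc
      have he : m + 1 - (j + 1) = m - j := by omega
      rw [he]
      push_cast
      linear_combination (-(x^j * x * y^(m-j))) * hc'
    rw [Finset.sum_congr rfl h, ← Finset.mul_sum, binom_sum]
    push_cast
    ring_nf

lemma fact_split (t i b0 b2 : ℕ) (hi : i ≤ t) (hb0 : b0 ≤ i) (hb2 : b2 ≤ t - i) :
    (t.factorial : ℝ) / ((b0.factorial : ℝ) * ((i-b0).factorial : ℝ) * (b2.factorial : ℝ)
        * ((t - i - b2).factorial : ℝ))
      = (t.choose i : ℝ) * (i.choose b0 : ℝ) * ((t-i).choose b2 : ℝ) := by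
  rw [Nat.cast_choose ℝ hi, Nat.cast_choose ℝ hb0, Nat.cast_choose ℝ hb2]
  have h1 : ((b0.factorial : ℝ)) ≠ 0 := Nat.cast_ne_zero.2 (Nat.factorial_ne_zero _)
  have h2 : (((i-b0).factorial : ℝ)) ≠ 0 := Nat.cast_ne_zero.2 (Nat.factorial_ne_zero _)
  have h3 : ((b2.factorial : ℝ)) ≠ 0 := Nat.cast_ne_zero.2 (Nat.factorial_ne_zero _)
  have h4 : (((t-i-b2).factorial : ℝ)) ≠ 0 := Nat.cast_ne_zero.2 (Nat.factorial_ne_zero _)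
  have h5 : ((i.factorial : ℝ)) ≠ 0 := Nat.cast_ne_zero.2 (Nat.factorial_ne_zero _)
  have h6 : (((t-i).factorial : ℝ)) ≠ 0 := Nat.cast_ne_zero.2 (Nat.factorial_ne_zero _)
  field_simp

lemma final_alg (c q s p0 p2 : ℝ) (hc : c ≠ 0) (hq : q ≠ 0) (hs : s ≠ 0) (i k : ℕ) :
    (c * q^i * s^k)⁻¹ * (c * ((i:ℝ) * p0 * q^(i-1) * s^k + (k:ℝ) * p2 * q^i * s^(k-1)))
      = i * p0 / q + k * p2 / s := by
  cases i with
  | zero =>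
    cases k with
    | zero => simp
    | succ m =>
      simp only [Nat.cast_zero, zero_mul, pow_zero, Nat.add_sub_cancel, zero_add]
      rw [pow_succ]
      field_simp
      ring
  | succ n =>
    cases k with
    | zero =>
      simp only [Nat.cast_zero, zero_mul, pow_zero, Nat.add_sub_cancel, add_zero]
      rw [pow_succ]
      field_simp
      ring
    | succ m =>
      simp only [Nat.add_sub_cancel]
      rw [pow_succ q n, pow_succ s m]
      field_simp

lemma key {Ω : Type*} [MeasureSpace Ω] [IsProbabilityMeasure (ℙ : Measure Ω)]
    (t : ℕ) (p0 p1 p2 : ℝ) (hp0 : 0 < p0) (hp1 : 0 < p1) (hp2 : 0 < p2)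
    (hp : p0 + p1 + p2 < 1)
    (B0 B1 B2 : Ω → ℕ) (hmult : IsMultinomial t p0 p1 p2 B0 B1 B2)
    (i : ℕ) (hi : i ≤ t) :
    (∫ ω, ((B2 ω + B0 ω : ℕ) : ℝ) ∂(ℙ[|{ω | B1 ω + B0 ω = i}])) =
      t * p2 / (1 - p0 - p1) + i * (p0 / (p0 + p1) - p2 / (1 - p0 - p1)) := by
  obtain ⟨hB0, hB1, hB2, hP⟩ := hmult
  have hqpos : (0:ℝ) < p0 + p1 := by linarith
  have hspos : (0:ℝ) < 1 - p0 - p1 := by linarith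
  set A : ℕ → ℕ → ℕ → Set Ω := fun b0 b1 b2 => {ω | B0 ω = b0 ∧ B1 ω = b1 ∧ B2 ω = b2}
    with hAdef
  have hAmeas : ∀ b0 b1 b2, MeasurableSet (A b0 b1 b2) := by
    intro b0 b1 b2
    have : A b0 b1 b2 = B0 ⁻¹' {b0} ∩ (B1 ⁻¹' {b1} ∩ B2 ⁻¹' {b2}) := by
      ext ω; simp [hAdef]
    rw [this]
    exact (hB0 (measurableSet_singleton b0)).inter
      ((hB1 (measurableSet_singleton b1)).inter (hB2 (measurableSet_singleton b2)))
  have hzero : ∀ b0 b1 b2 : ℕ, t < b0 + b1 + b2 → ℙ (A b0 b1 b2) = 0 := by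
    intro b0 b1 b2 h
    have h' := hP b0 b1 b2
    rw [if_neg (by omega)] at h'
    rcases (ENNReal.toReal_eq_zero_iff _).1 h' with h'' | h''
    · exact h''
    · exact absurd h'' (measure_ne_top _ _)
  set S : Set Ω := {ω | B1 ω + B0 ω = i} with hSdef
  set P : Finset (ℕ × ℕ) := range (i+1) ×ˢ range (t - i + 1) with hPdef
  set U : Set Ω := ⋃ p ∈ P, A p.1 (i - p.1) p.2 with hUdef
  have hUS : U ⊆ S := by
    intro ω hω
    simp only [hUdef, Set.mem_iUnion] at hω
    obtain ⟨p, hpP, hω⟩ := hω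
    simp only [hPdef, Finset.mem_product, Finset.mem_range] at hpP
    simp only [hAdef, Set.mem_setOf_eq] at hω
    simp only [hSdef, Set.mem_setOf_eq, hω.1, hω.2.1]
    omega
  have hdiffnull : ℙ (S \ U) = 0 := by
    have hsub : S \ U ⊆ ⋃ x ∈ {x : ℕ × ℕ × ℕ | t < x.1 + x.2.1 + x.2.2},
        A x.1 x.2.1 x.2.2 := by
      intro ω hω
      obtain ⟨hωS, hωU⟩ := hω
      simp only [hSdef, Set.mem_setOf_eq] at hωS
      by_cases hc : B0 ω + B1 ω + B2 ω ≤ t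
      · exfalso
        apply hωU
        simp only [hUdef, Set.mem_iUnion]
        refine ⟨(B0 ω, B2 ω), ?_, ?_⟩
        · simp only [hPdef, Finset.mem_product, Finset.mem_range]
          omega
        · show B0 ω = (B0 ω, B2 ω).1 ∧ B1 ω = i - (B0 ω, B2 ω).1 ∧ B2 ω = (B0 ω, B2 ω).2
          refine ⟨rfl, ?_, rfl⟩
          show B1 ω = i - B0 ω
          omega
      · have h1 : (B0 ω, B1 ω, B2 ω) ∈ {x : ℕ × ℕ × ℕ | t < x.1 + x.2.1 + x.2.2} := by
          simp only [Set.mem_setOf_eq]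
          omega
        have h2 : ω ∈ A (B0 ω) (B1 ω) (B2 ω) :=
          show B0 ω = B0 ω ∧ B1 ω = B1 ω ∧ B2 ω = B2 ω from ⟨rfl, rfl, rfl⟩
        exact Set.mem_biUnion h1 h2
    refine measure_mono_null hsub ?_
    rw [measure_biUnion_null_iff (Set.to_countable _)]
    intro x hx
    exact hzero _ _ _ hx
  have hae : S =ᵐ[ℙ] U := by
    rw [MeasureTheory.ae_eq_set]
    exact ⟨hdiffnull, by rw [Set.diff_eq_empty.2 hUS]; exact measure_empty⟩
  have hdisj : (↑P : Set (ℕ × ℕ)).Pairwise (Function.onFun Disjoint fun p : ℕ × ℕ => A p.1 (i - p.1) p.2) := by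
    intro p _ p' _ hne
    refine Set.disjoint_left.2 fun ω hω hω' => hne ?_
    simp only [hAdef, Set.mem_setOf_eq] at hω hω'
    exact Prod.ext (hω.1.symm.trans hω'.1) (hω.2.2.symm.trans hω'.2.2)
  -- value of point probabilities
  have hval : ∀ p ∈ P, (ℙ (A p.1 (i - p.1) p.2)).toReal =
      (t.choose i : ℝ) * ((i.choose p.1 : ℝ) * p0 ^ p.1 * p1 ^ (i - p.1)) *
        (((t-i).choose p.2 : ℝ) * p2 ^ p.2 * (1 - (p0 + p1 + p2)) ^ ((t-i) - p.2)) := by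
    intro p hpP
    simp only [hPdef, Finset.mem_product, Finset.mem_range] at hpP
    have hb0 : p.1 ≤ i := by omega
    have hb2 : p.2 ≤ t - i := by omega
    have h := hP p.1 (i - p.1) p.2
    have e1 : p.1 + (i - p.1) + p.2 = i + p.2 := by omega
    rw [e1, if_pos (by omega)] at h
    have e2 : t - (i + p.2) = t - i - p.2 := by omega
    rw [e2] at h
    rw [h, fact_split t i p.1 p.2 hi hb0 hb2]
    ring
  -- total probability
  have hD : (ℙ S).toReal = (t.choose i : ℝ) * (p0 + p1) ^ i * (1 - p0 - p1) ^ (t - i) := by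
    rw [measure_congr hae, hUdef, measure_biUnion_finset hdisj (fun p _ => hAmeas _ _ _),
      ENNReal.toReal_sum (fun p _ => measure_ne_top _ _)]
    rw [Finset.sum_congr rfl hval]
    rw [hPdef, Finset.sum_product]
    have inner : ∀ b0 ∈ range (i+1),
        (∑ b2 ∈ range (t-i+1), (t.choose i : ℝ) * ((i.choose b0 : ℝ) * p0^b0 * p1^(i-b0)) *
          (((t-i).choose b2 : ℝ) * p2^b2 * (1-(p0+p1+p2))^((t-i)-b2)))
          = ((t.choose i : ℝ) * (p2 + (1-(p0+p1+p2)))^(t-i)) *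
              ((i.choose b0 : ℝ) * p0^b0 * p1^(i-b0)) := by
      intro b0 _
      rw [← Finset.mul_sum, binom_sum]
      ring
    rw [Finset.sum_congr rfl inner, ← Finset.mul_sum, binom_sum]
    have e1 : p2 + (1 - (p0 + p1 + p2)) = 1 - p0 - p1 := by ring
    rw [e1]
    ring
  -- the integral over S
  have hint : ∀ p ∈ P, IntegrableOn (fun ω => ((B2 ω + B0 ω : ℕ) : ℝ))
      (A p.1 (i - p.1) p.2) ℙ := by
    intro p _
    have hEq : Set.EqOn (fun ω => ((B2 ω + B0 ω : ℕ) : ℝ))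
        (fun _ => ((p.2 + p.1 : ℕ) : ℝ)) (A p.1 (i - p.1) p.2) := by
      intro ω hω
      simp only [hAdef, Set.mem_setOf_eq] at hω
      simp [hω.1, hω.2.2]
    exact (integrableOn_congr_fun hEq (hAmeas _ _ _)).2
      (integrableOn_const (measure_ne_top _ _))
  have hN : ∫ ω in S, ((B2 ω + B0 ω : ℕ) : ℝ) ∂ℙ =
      (t.choose i : ℝ) * ((i:ℝ) * p0 * (p0 + p1) ^ (i-1) * (1 - p0 - p1) ^ (t - i)
        + ((t - i : ℕ) : ℝ) * p2 * (p0 + p1) ^ i * (1 - p0 - p1) ^ (t - i - 1)) := by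
    rw [setIntegral_congr_set hae, hUdef,
      integral_biUnion_finset P (fun p _ => hAmeas _ _ _) hdisj hint]
    have hterm : ∀ p ∈ P, ∫ ω in A p.1 (i - p.1) p.2, ((B2 ω + B0 ω : ℕ) : ℝ) ∂ℙ =
        (ℙ (A p.1 (i - p.1) p.2)).toReal * ((p.2 + p.1 : ℕ) : ℝ) := by
      intro p _
      have hEq : Set.EqOn (fun ω => ((B2 ω + B0 ω : ℕ) : ℝ))
          (fun _ => ((p.2 + p.1 : ℕ) : ℝ)) (A p.1 (i - p.1) p.2) := by
        intro ω hω
        simp only [hAdef, Set.mem_setOf_eq] at hω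
        simp [hω.1, hω.2.2]
      rw [setIntegral_congr_fun (hAmeas _ _ _) hEq, setIntegral_const, smul_eq_mul, measureReal_def]
    rw [Finset.sum_congr rfl hterm]
    have hterm2 : ∀ p ∈ P, (ℙ (A p.1 (i - p.1) p.2)).toReal * ((p.2 + p.1 : ℕ) : ℝ) =
        (t.choose i : ℝ) * (((i.choose p.1 : ℝ) * p0 ^ p.1 * p1 ^ (i - p.1)) *
          ((p.2 : ℝ) * ((t-i).choose p.2 : ℝ) * p2 ^ p.2 * (1 - (p0+p1+p2)) ^ ((t-i) - p.2)))
        + (t.choose i : ℝ) * (((p.1 : ℝ) * (i.choose p.1 : ℝ) * p0 ^ p.1 * p1 ^ (i - p.1)) *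
          (((t-i).choose p.2 : ℝ) * p2 ^ p.2 * (1 - (p0+p1+p2)) ^ ((t-i) - p.2))) := by
      intro p hpP
      rw [hval p hpP]
      push_cast
      ring
    rw [Finset.sum_congr rfl hterm2, Finset.sum_add_distrib]
    rw [hPdef, Finset.sum_product, Finset.sum_product]
    have inner1 : ∀ b0 ∈ range (i+1),
        (∑ b2 ∈ range (t-i+1), (t.choose i : ℝ) * (((i.choose b0 : ℝ) * p0^b0 * p1^(i-b0)) *
          ((b2 : ℝ) * ((t-i).choose b2 : ℝ) * p2^b2 * (1-(p0+p1+p2))^((t-i)-b2))))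
          = ((t.choose i : ℝ) * (((t-i : ℕ)) * p2 * (p2 + (1-(p0+p1+p2)))^(t-i-1))) *
              ((i.choose b0 : ℝ) * p0^b0 * p1^(i-b0)) := by
      intro b0 _
      rw [← Finset.mul_sum, ← Finset.mul_sum, binom_first_moment]
      ring
    have inner2 : ∀ b0 ∈ range (i+1),
        (∑ b2 ∈ range (t-i+1), (t.choose i : ℝ) * (((b0 : ℝ) * (i.choose b0 : ℝ) * p0^b0 * p1^(i-b0)) *
          (((t-i).choose b2 : ℝ) * p2^b2 * (1-(p0+p1+p2))^((t-i)-b2))))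
          = ((t.choose i : ℝ) * (p2 + (1-(p0+p1+p2)))^(t-i)) *
              ((b0 : ℝ) * (i.choose b0 : ℝ) * p0^b0 * p1^(i-b0)) := by
      intro b0 _
      rw [← Finset.mul_sum, ← Finset.mul_sum, binom_sum]
      ring
    rw [Finset.sum_congr rfl inner1, Finset.sum_congr rfl inner2,
      ← Finset.mul_sum, ← Finset.mul_sum, binom_sum, binom_first_moment]
    have e1 : p2 + (1 - (p0 + p1 + p2)) = 1 - p0 - p1 := by ring
    rw [e1]
    ring
  -- put it together
  rw [ProbabilityTheory.cond, integral_smul_measure, ENNReal.toReal_inv, smul_eq_mul]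
  rw [hD]
  rw [hN]
  rw [final_alg _ _ _ p0 p2 (Nat.cast_ne_zero.2 (Nat.choose_pos hi).ne') hqpos.ne' hspos.ne' i (t-i)]
  rw [Nat.cast_sub hi]
  ring

lemma IsMultinomial.swap {Ω : Type*} [MeasureSpace Ω] {t : ℕ} {p0 p1 p2 : ℝ}
    {B0 B1 B2 : Ω → ℕ} (h : IsMultinomial t p0 p1 p2 B0 B1 B2) :
    IsMultinomial t p0 p2 p1 B0 B2 B1 := by
  obtain ⟨h0, h1, h2, hP⟩ := h
  refine ⟨h0, h2, h1, fun b0 b2 b1 => ?_⟩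
  have hset : {ω | B0 ω = b0 ∧ B2 ω = b2 ∧ B1 ω = b1}
      = {ω | B0 ω = b0 ∧ B1 ω = b1 ∧ B2 ω = b2} := by
    ext ω; simp only [Set.mem_setOf_eq]; tauto
  rw [hset, hP b0 b1 b2]
  have e : b0 + b2 + b1 = b0 + b1 + b2 := by omega
  rw [e]
  split_ifs with hc
  · ring
  · rfl

/-- the mean square regression of `M_s` on `M_r` is linear, for
`(r, s) = (1, 2)` and `(r, s) = (2, 1)`, where `M1 = B1 + B0`, `M2 = B2 + B0`. -/
theorem conditional_expectation_linear_of_bivariate_binomial_counting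
    {Ω : Type*} [MeasureSpace Ω] [IsProbabilityMeasure (ℙ : Measure Ω)]
    (t : ℕ) (p0 p1 p2 : ℝ) (hp0 : 0 < p0) (hp1 : 0 < p1) (hp2 : 0 < p2)
    (hp : p0 + p1 + p2 < 1)
    (B0 B1 B2 : Ω → ℕ)
    (hmult : IsMultinomial t p0 p1 p2 B0 B1 B2) :
    ∀ i : ℕ, i ≤ t →
      ((ℙ {ω | B1 ω + B0 ω = i} ≠ 0 →
        (∫ ω, ((B2 ω + B0 ω : ℕ) : ℝ) ∂(ℙ[|{ω | B1 ω + B0 ω = i}])) =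
          t * p2 / (1 - p0 - p1) + i * (p0 / (p0 + p1) - p2 / (1 - p0 - p1))) ∧
       (ℙ {ω | B2 ω + B0 ω = i} ≠ 0 →
        (∫ ω, ((B1 ω + B0 ω : ℕ) : ℝ) ∂(ℙ[|{ω | B2 ω + B0 ω = i}])) =
          t * p1 / (1 - p0 - p2) + i * (p0 / (p0 + p2) - p1 / (1 - p0 - p2)))) := by
  intro i hi
  refine ⟨fun _ => ?_, fun _ => ?_⟩
  · exact key t p0 p1 p2 hp0 hp1 hp2 hp B0 B1 B2 hmult i hi
  · exact key t p0 p2 p1 hp0 hp2 hp1 (by linarith) B0 B2 B1 hmult.swap i hi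
end

section
/- (Corollary 3 ii) In the compound multinomial model, if E[Y1_1^2], E[Y2_1^2], E[Y3_1^2], E[Y4_1^2] are all finite, then Var(S1) = t·[p1·E[Y1_1^2] + p0·E[Y3_1^2] − (p1·E[Y1_1] + p0·E[Y3_1])^2] and Var(S2) = t·[p2·E[Y2_1^2] + p0·E[Y4_1^2] − (p2·E[Y2_1] + p0·E[Y4_1])^2]. -/
open MeasureTheory ProbabilityTheory Finset

namespace CompoundMult

/-- The triangle index set. -/
def TT (t : ℕ) : Finset (ℕ × ℕ) :=
  (Finset.range (t+1) ×ˢ Finset.range (t+1)).filter (fun p => p.1 + p.2 ≤ t)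

lemma mem_TT {t : ℕ} {p : ℕ × ℕ} : p ∈ TT t ↔ p.1 + p.2 ≤ t := by
  simp only [TT, mem_filter, mem_product, mem_range]
  omega

/-- The multinomial weight. -/
noncomputable def W (t : ℕ) (x y z : ℝ) (b0 b1 : ℕ) : ℝ :=
  (Nat.factorial t : ℝ) /
    ((Nat.factorial b0 : ℝ) * (Nat.factorial b1 : ℝ) * (Nat.factorial (t - (b0 + b1)) : ℝ)) *
    (x ^ b0 * y ^ b1 * z ^ (t - (b0 + b1)))

lemma fact_ne (n : ℕ) : (Nat.factorial n : ℝ) ≠ 0 := by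
  exact_mod_cast Nat.factorial_ne_zero n

lemma W_choose {t b0 b1 : ℕ} (h : b0 + b1 ≤ t) (x y z : ℝ) :
    W t x y z b0 b1 =
      (t.choose b0 : ℝ) * x ^ b0 * (((t - b0).choose b1 : ℝ) * y ^ b1 * z ^ ((t - b0) - b1)) := by
  have h0 : b0 ≤ t := by omega
  have h1 : b1 ≤ t - b0 := by omega
  have e1 : t.choose b0 * b0.factorial * (t - b0).factorial = t.factorial :=
    Nat.choose_mul_factorial_mul_factorial h0
  have e2 : (t - b0).choose b1 * b1.factorial * ((t - b0) - b1).factorial =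
      (t - b0).factorial := Nat.choose_mul_factorial_mul_factorial h1
  have hsub : (t - b0) - b1 = t - (b0 + b1) := by omega
  rw [W, hsub]
  have e1' : (t.choose b0 : ℝ) * b0.factorial * (t - b0).factorial = t.factorial := by
    exact_mod_cast congrArg (Nat.cast : ℕ → ℝ) e1
  have e2' : ((t - b0).choose b1 : ℝ) * b1.factorial * (t - (b0 + b1)).factorial =
      (t - b0).factorial := by
    rw [← hsub]; exact_mod_cast congrArg (Nat.cast : ℕ → ℝ) e2
  have key : (t.factorial : ℝ) = (t.choose b0 : ℝ) * ((t - b0).choose b1 : ℝ) *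
      ((b0.factorial : ℝ) * (b1.factorial : ℝ) * ((t - (b0+b1)).factorial : ℝ)) := by
    rw [← e1', ← e2']; ring
  have hD : ((b0.factorial : ℝ) * (b1.factorial : ℝ) * ((t - (b0+b1)).factorial : ℝ)) ≠ 0 :=
    mul_ne_zero (mul_ne_zero (fact_ne b0) (fact_ne b1)) (fact_ne _)
  rw [key, mul_div_assoc, div_self hD, mul_one]
  ring

/-- Binomial theorem variant. -/
lemma bsum (n : ℕ) (x z : ℝ) :
    ∑ k ∈ range (n+1), (n.choose k : ℝ) * x ^ k * z ^ (n - k) = (x + z) ^ n := by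
  rw [add_pow]
  exact Finset.sum_congr rfl fun k _ => by ring

/-- Trinomial theorem over the triangle. -/
lemma tri_base (t : ℕ) (x y z : ℝ) :
    ∑ p ∈ TT t, W t x y z p.1 p.2 = (x + y + z) ^ t := by
  rw [TT, sum_filter, Finset.sum_product]
  have inner : ∀ b0 ∈ range (t+1),
      (∑ b1 ∈ range (t+1), if b0 + b1 ≤ t then W t x y z b0 b1 else 0)
        = (t.choose b0 : ℝ) * x ^ b0 * (y + z) ^ (t - b0) := by
    intro b0 hb0
    have hb0' : b0 ≤ t := by simpa [Nat.lt_succ_iff] using hb0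
    have step1 : (∑ b1 ∈ range (t+1), if b0 + b1 ≤ t then W t x y z b0 b1 else 0)
        = ∑ b1 ∈ range (t - b0 + 1), if b0 + b1 ≤ t then W t x y z b0 b1 else 0 := by
      refine (Finset.sum_subset ?_ ?_).symm
      · intro b1 hb1; simp only [mem_range] at *; omega
      · intro b1 _ hb1; simp only [mem_range] at hb1
        rw [if_neg (by omega)]
    rw [step1]
    have step2 : ∀ b1 ∈ range (t - b0 + 1),
        (if b0 + b1 ≤ t then W t x y z b0 b1 else 0)
          = (t.choose b0 : ℝ) * x ^ b0 *
            (((t - b0).choose b1 : ℝ) * y ^ b1 * z ^ ((t - b0) - b1)) := by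
      intro b1 hb1
      simp only [mem_range] at hb1
      rw [if_pos (by omega), W_choose (by omega)]
    rw [Finset.sum_congr rfl step2, ← Finset.mul_sum, bsum]
  rw [Finset.sum_congr rfl inner, bsum]
  ring

/-- Swap symmetry. -/
lemma tri_swap (t : ℕ) (F : ℕ → ℕ → ℝ) :
    ∑ p ∈ TT t, F p.1 p.2 = ∑ p ∈ TT t, F p.2 p.1 := by
  refine Finset.sum_bij' (fun p _ => Prod.swap p) (fun p _ => Prod.swap p) ?_ ?_ ?_ ?_ ?_
  · intro p hp; rw [mem_TT] at *; simp only [Prod.snd_swap, Prod.fst_swap]; omega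
  · intro p hp; rw [mem_TT] at *; simp only [Prod.snd_swap, Prod.fst_swap]; omega
  · intro p _; simp
  · intro p _; simp
  · intro p _; simp

lemma W_swap (t : ℕ) (x y z : ℝ) (b0 b1 : ℕ) : W t x y z b0 b1 = W t y x z b1 b0 := by
  unfold W
  rw [show b1 + b0 = b0 + b1 by omega]
  ring

/-- Shift lemma in the second variable. -/
lemma shiftY (t : ℕ) (x y z : ℝ) (f : ℕ → ℕ → ℝ) :
    ∑ p ∈ TT (t+1), (p.2 : ℝ) * f p.1 p.2 * W (t+1) x y z p.1 p.2
      = (t + 1 : ℝ) * y * ∑ p ∈ TT t, f p.1 (p.2 + 1) * W t x y z p.1 p.2 := by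
  rw [Finset.mul_sum]
  have h1 : ∑ p ∈ TT (t+1), (p.2:ℝ) * f p.1 p.2 * W (t+1) x y z p.1 p.2
      = ∑ p ∈ (TT (t+1)).filter (fun p => p.2 ≠ 0),
          (p.2:ℝ) * f p.1 p.2 * W (t+1) x y z p.1 p.2 := by
    refine (Finset.sum_filter_of_ne ?_).symm
    intro p _ hne
    intro h0
    apply hne
    rw [h0]
    simp
  rw [h1]
  refine (Finset.sum_bij' (fun (p : ℕ × ℕ) (_ : p ∈ TT t) => (p.1, p.2 + 1))
    (fun (p : ℕ × ℕ) (_ : p ∈ (TT (t+1)).filter (fun p => p.2 ≠ 0)) => (p.1, p.2 - 1))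
    ?_ ?_ ?_ ?_ ?_).symm
  · intro p hp
    rw [mem_TT] at hp
    simp only [mem_filter, mem_TT]
    exact ⟨by omega, by omega⟩
  · intro p hp
    simp only [mem_filter, mem_TT] at hp
    rw [mem_TT]
    simp only
    omega
  · intro p hp
    simp
  · intro p hp
    simp only [mem_filter, mem_TT, ne_eq] at hp
    obtain ⟨a, b⟩ := p
    simp only
    have : b - 1 + 1 = b := by omega
    rw [this]
  · intro p hp
    rw [mem_TT] at hp
    obtain ⟨b0, b1⟩ := p
    simp only at *
    have key : (↑(b1+1) : ℝ) * W (t+1) x y z b0 (b1+1) = (t+1 : ℝ) * y * W t x y z b0 b1 := by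
      unfold W
      have e1 : (t+1) - (b0 + (b1+1)) = t - (b0 + b1) := by omega
      have e2 : (Nat.factorial (t+1) : ℝ) = (t+1) * Nat.factorial t := by
        rw [Nat.factorial_succ]; push_cast; ring
      have e3 : (Nat.factorial (b1+1) : ℝ) = (b1+1) * Nat.factorial b1 := by
        rw [Nat.factorial_succ]; push_cast; ring
      rw [e1, e2, e3]
      have hb0 := fact_ne b0
      have hb1 := fact_ne b1
      have hr := fact_ne (t - (b0+b1))
      have ht := fact_ne t
      field_simp
      push_cast
      ring
    calc (t+1:ℝ) * y * (f b0 (b1+1) * W t x y z b0 b1)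
        = f b0 (b1+1) * ((t+1:ℝ) * y * W t x y z b0 b1) := by ring
      _ = f b0 (b1+1) * ((↑(b1+1) : ℝ) * W (t+1) x y z b0 (b1+1)) := by rw [key]
      _ = (↑(b1+1) : ℝ) * f b0 (b1+1) * W (t+1) x y z b0 (b1+1) := by ring

section Identities

variable {x y z : ℝ}

lemma I1 (t : ℕ) (hs : x + y + z = 1) : ∑ p ∈ TT t, W t x y z p.1 p.2 = 1 := by
  rw [tri_base, hs, one_pow]

lemma I2y (t : ℕ) (hs : x + y + z = 1) :
    ∑ p ∈ TT t, (p.2 : ℝ) * W t x y z p.1 p.2 = t * y := by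
  cases t with
  | zero =>
    rw [Finset.sum_eq_zero]
    · simp
    · intro p hp
      rw [mem_TT] at hp
      have : p.2 = 0 := by omega
      rw [this]
      simp
  | succ s =>
    have h := shiftY s x y z (fun _ _ => 1)
    simp only [mul_one, one_mul] at h
    rw [h, I1 s hs]
    push_cast
    ring

lemma I2x (t : ℕ) (hs : x + y + z = 1) :
    ∑ p ∈ TT t, (p.1 : ℝ) * W t x y z p.1 p.2 = t * x := by
  have hswap := tri_swap t (fun a b => (a : ℝ) * W t x y z a b)
  rw [hswap]
  have : ∀ p ∈ TT t, (p.2 : ℝ) * W t x y z p.2 p.1 = (p.2 : ℝ) * W t y x z p.1 p.2 := by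
    intro p _
    rw [W_swap t x y z p.2 p.1]
  rw [Finset.sum_congr rfl this, I2y t (by linarith)]

lemma I3y (t : ℕ) (hs : x + y + z = 1) :
    ∑ p ∈ TT t, (p.2 : ℝ) * ((p.2 : ℝ) - 1) * W t x y z p.1 p.2
      = (t : ℝ) * ((t : ℝ) - 1) * y ^ 2 := by
  cases t with
  | zero =>
    rw [Finset.sum_eq_zero]
    · simp
    · intro p hp
      rw [mem_TT] at hp
      have : p.2 = 0 := by omega
      rw [this]
      simp
  | succ s =>
    have h := shiftY s x y z (fun _ b => (b : ℝ) - 1)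
    have e : ∀ p ∈ TT (s+1), (p.2 : ℝ) * ((p.2 : ℝ) - 1) * W (s+1) x y z p.1 p.2
        = (p.2 : ℝ) * ((fun _ b => (b : ℝ) - 1) p.1 p.2) * W (s+1) x y z p.1 p.2 := by
      intro p _; ring
    rw [Finset.sum_congr rfl e, h]
    have e2 : ∀ p ∈ TT s, ((↑(p.2 + 1) : ℝ) - 1) * W s x y z p.1 p.2
        = (p.2 : ℝ) * W s x y z p.1 p.2 := by
      intro p _
      push_cast
      ring
    rw [Finset.sum_congr rfl e2, I2y s hs]
    push_cast
    ring

lemma I3x (t : ℕ) (hs : x + y + z = 1) :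
    ∑ p ∈ TT t, (p.1 : ℝ) * ((p.1 : ℝ) - 1) * W t x y z p.1 p.2
      = (t : ℝ) * ((t : ℝ) - 1) * x ^ 2 := by
  have hswap := tri_swap t (fun a b => (a : ℝ) * ((a : ℝ) - 1) * W t x y z a b)
  rw [hswap]
  have : ∀ p ∈ TT t, (p.2 : ℝ) * ((p.2 : ℝ) - 1) * W t x y z p.2 p.1
      = (p.2 : ℝ) * ((p.2 : ℝ) - 1) * W t y x z p.1 p.2 := by
    intro p _
    rw [W_swap t x y z p.2 p.1]
  rw [Finset.sum_congr rfl this, I3y t (by linarith)]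

lemma I4 (t : ℕ) (hs : x + y + z = 1) :
    ∑ p ∈ TT t, (p.1 : ℝ) * (p.2 : ℝ) * W t x y z p.1 p.2
      = (t : ℝ) * ((t : ℝ) - 1) * x * y := by
  cases t with
  | zero =>
    rw [Finset.sum_eq_zero]
    · simp
    · intro p hp
      rw [mem_TT] at hp
      have : p.2 = 0 := by omega
      rw [this]
      simp
  | succ s =>
    have h := shiftY s x y z (fun a _ => (a : ℝ))
    have e : ∀ p ∈ TT (s+1), (p.1 : ℝ) * (p.2 : ℝ) * W (s+1) x y z p.1 p.2
        = (p.2 : ℝ) * ((fun a _ => (a : ℝ)) p.1 p.2) * W (s+1) x y z p.1 p.2 := by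
      intro p _; ring
    rw [Finset.sum_congr rfl e, h, I2x s hs]
    push_cast
    ring

end Identities

section Prob

open MeasureTheory ProbabilityTheory

variable {Ω : Type*} [MeasureSpace Ω] [IsProbabilityMeasure (ℙ : Measure Ω)]

lemma marginal (t : ℕ) (x y z w : ℝ) (D0 D1 D2 : Ω → ℕ)
    (h0 : Measurable D0) (h1 : Measurable D1) (h2 : Measurable D2)
    (hpmf : ∀ b0 b1 b2 : ℕ, (ℙ {ω | D0 ω = b0 ∧ D1 ω = b1 ∧ D2 ω = b2}).toReal =
      if b0 + b1 + b2 ≤ t then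
        (t.factorial : ℝ) / ((b0.factorial : ℝ) * (b1.factorial : ℝ) * (b2.factorial : ℝ) *
          ((t - (b0+b1+b2)).factorial : ℝ)) *
          (x ^ b0 * y ^ b1 * z ^ b2 * w ^ (t - (b0+b1+b2)))
      else 0)
    (b0 b1 : ℕ) :
    (ℙ {ω | D0 ω = b0 ∧ D1 ω = b1}).toReal =
      if b0 + b1 ≤ t then W t x y (z + w) b0 b1 else 0 := by
  classical
  have hmeas3 : ∀ b2 : ℕ, MeasurableSet {ω | D0 ω = b0 ∧ D1 ω = b1 ∧ D2 ω = b2} := by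
    intro b2
    exact (h0 (measurableSet_singleton b0)).inter
      ((h1 (measurableSet_singleton b1)).inter (h2 (measurableSet_singleton b2)))
  have hset : {ω | D0 ω = b0 ∧ D1 ω = b1}
      = ⋃ b2, {ω | D0 ω = b0 ∧ D1 ω = b1 ∧ D2 ω = b2} := by
    ext ω
    simp only [Set.mem_setOf_eq, Set.mem_iUnion]
    constructor
    · rintro ⟨ha, hb⟩; exact ⟨D2 ω, ha, hb, rfl⟩
    · rintro ⟨b2, ha, hb, _⟩; exact ⟨ha, hb⟩
  have hdisj : Pairwise (Function.onFun Disjoint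
      (fun b2 => {ω | D0 ω = b0 ∧ D1 ω = b1 ∧ D2 ω = b2})) := by
    intro i j hij
    rw [Function.onFun, Set.disjoint_left]
    rintro ω ⟨_, _, hi⟩ ⟨_, _, hj⟩
    exact hij (hi ▸ hj ▸ rfl)
  have hU : ℙ {ω | D0 ω = b0 ∧ D1 ω = b1}
      = ∑' b2, ℙ {ω | D0 ω = b0 ∧ D1 ω = b1 ∧ D2 ω = b2} := by
    rw [hset, measure_iUnion hdisj hmeas3]
  have hzero_of : ∀ b2 : ℕ, ¬ (b0 + b1 + b2 ≤ t) →
      ℙ {ω | D0 ω = b0 ∧ D1 ω = b1 ∧ D2 ω = b2} = 0 := by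
    intro b2 hb2
    have h := hpmf b0 b1 b2
    rw [if_neg hb2] at h
    rcases (ENNReal.toReal_eq_zero_iff _).1 h with h' | h'
    · exact h'
    · exact absurd h' (measure_ne_top _ _)
  by_cases hble : b0 + b1 ≤ t
  · set n := t - (b0 + b1) with hn
    have hzero : ∀ b2 ∉ Finset.range (n+1),
        ℙ {ω | D0 ω = b0 ∧ D1 ω = b1 ∧ D2 ω = b2} = 0 := by
      intro b2 hb2
      simp only [Finset.mem_range] at hb2
      exact hzero_of b2 (by omega)
    rw [hU, tsum_eq_sum hzero, ENNReal.toReal_sum (fun a _ => measure_ne_top _ _), if_pos hble]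
    have hterm : ∀ b2 ∈ Finset.range (n+1),
        (ℙ {ω | D0 ω = b0 ∧ D1 ω = b1 ∧ D2 ω = b2}).toReal
          = ((t.factorial : ℝ) / ((b0.factorial : ℝ) * (b1.factorial : ℝ) *
              (n.factorial : ℝ)) * (x ^ b0 * y ^ b1)) *
            ((n.choose b2 : ℝ) * z ^ b2 * w ^ (n - b2)) := by
      intro b2 hb2
      simp only [Finset.mem_range] at hb2
      have hb2n : b2 ≤ n := by omega
      have hsub : t - (b0 + b1 + b2) = n - b2 := by omega
      rw [hpmf b0 b1 b2, if_pos (by omega), hsub]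
      rw [Nat.cast_choose ℝ hb2n]
      have h1' := fact_ne b0
      have h2' := fact_ne b1
      have h3' := fact_ne b2
      have h4' := fact_ne n
      have h5' := fact_ne (n - b2)
      field_simp
    rw [Finset.sum_congr rfl hterm, ← Finset.mul_sum, bsum n z w]
    rw [W]
    rw [← hn]
    ring
  · rw [if_neg hble, hU]
    have : ∀ b2 : ℕ, ℙ {ω | D0 ω = b0 ∧ D1 ω = b1 ∧ D2 ω = b2} = 0 := fun b2 =>
      hzero_of b2 (by omega)
    simp [this]

lemma fixed_moments (A C : ℕ → Ω → ℝ)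
    (hAm : ∀ i, Measurable (A i)) (hCm : ∀ i, Measurable (C i))
    (hAid : ∀ i, IdentDistrib (A i) (A 0) ℙ ℙ) (hCid : ∀ i, IdentDistrib (C i) (C 0) ℙ ℙ)
    (hA2 : Integrable (fun ω => A 0 ω ^ 2) ℙ) (hC2 : Integrable (fun ω => C 0 ω ^ 2) ℙ)
    (hAA : ∀ i j, i ≠ j → IndepFun (A i) (A j) ℙ)
    (hCC : ∀ i j, i ≠ j → IndepFun (C i) (C j) ℙ)
    (hAC : ∀ i j, IndepFun (A i) (C j) ℙ)
    (m n : ℕ) :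
    (∫ ω, (∑ i ∈ Finset.range m, A i ω + ∑ i ∈ Finset.range n, C i ω) ∂ℙ
        = m * (∫ ω, A 0 ω ∂ℙ) + n * (∫ ω, C 0 ω ∂ℙ)) ∧
    (∫ ω, (∑ i ∈ Finset.range m, A i ω + ∑ i ∈ Finset.range n, C i ω) ^ 2 ∂ℙ
        = (m * (∫ ω, A 0 ω ∂ℙ) + n * (∫ ω, C 0 ω ∂ℙ)) ^ 2
          + m * ((∫ ω, A 0 ω ^ 2 ∂ℙ) - (∫ ω, A 0 ω ∂ℙ) ^ 2)
          + n * ((∫ ω, C 0 ω ^ 2 ∂ℙ) - (∫ ω, C 0 ω ∂ℙ) ^ 2)) := by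
  classical
  set D : ℕ ⊕ ℕ → Ω → ℝ := Sum.elim A C with hD
  set U : Finset (ℕ ⊕ ℕ) := (Finset.range m).disjSum (Finset.range n) with hU
  have hDm : ∀ k, Measurable (D k) := by rintro (i | i); exacts [hAm i, hCm i]
  have memA0 : MemLp (A 0) 2 ℙ :=
    (memLp_two_iff_integrable_sq (hAm 0).aestronglyMeasurable).2 hA2
  have memC0 : MemLp (C 0) 2 ℙ :=
    (memLp_two_iff_integrable_sq (hCm 0).aestronglyMeasurable).2 hC2
  have memD : ∀ k, MemLp (D k) 2 ℙ := by
    rintro (i | i)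
    · exact (hAid i).symm.memLp_snd memA0
    · exact (hCid i).symm.memLp_snd memC0
  have intD : ∀ k, Integrable (D k) ℙ := fun k => (memD k).integrable one_le_two
  have intDsq : ∀ k, Integrable (fun ω => D k ω ^ 2) ℙ := fun k => (memD k).integrable_sq
  set μD : ℕ ⊕ ℕ → ℝ := Sum.elim (fun _ => ∫ ω, A 0 ω ∂ℙ) (fun _ => ∫ ω, C 0 ω ∂ℙ) with hμD
  set sD : ℕ ⊕ ℕ → ℝ := Sum.elim (fun _ => ∫ ω, A 0 ω ^ 2 ∂ℙ) (fun _ => ∫ ω, C 0 ω ^ 2 ∂ℙ)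
    with hsD
  have meanD : ∀ k, ∫ ω, D k ω ∂ℙ = μD k := by
    rintro (i | i)
    · exact (hAid i).integral_eq
    · exact (hCid i).integral_eq
  have sqD : ∀ k, ∫ ω, D k ω ^ 2 ∂ℙ = sD k := by
    rintro (i | i)
    · exact ((hAid i).comp (measurable_id.pow_const 2)).integral_eq
    · exact ((hCid i).comp (measurable_id.pow_const 2)).integral_eq
  have indepD : ∀ k l, k ≠ l → IndepFun (D k) (D l) ℙ := by
    rintro (i | i) (j | j) hne
    · exact hAA i j (by simpa using hne)
    · exact hAC i j
    · exact (hAC j i).symm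
    · exact hCC i j (by simpa using hne)
  have hg_eq : ∀ ω, (∑ i ∈ Finset.range m, A i ω + ∑ i ∈ Finset.range n, C i ω)
      = ∑ k ∈ U, D k ω := by
    intro ω
    rw [hU, Finset.sum_disjSum]
    rfl
  have prodInt : ∀ k l, Integrable (fun ω => D k ω * D l ω) ℙ := by
    intro k l
    by_cases hkl : k = l
    · subst hkl
      have := intDsq k
      simpa [pow_two] using this
    · have := (indepD k l hkl).integrable_mul (intD k) (intD l)
      exact this
  have Eprod : ∀ k l, ∫ ω, D k ω * D l ω ∂ℙ = if k = l then sD k else μD k * μD l := by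
    intro k l
    by_cases hkl : k = l
    · subst hkl
      rw [if_pos rfl, ← sqD k]
      congr 1
      funext ω
      ring
    · rw [if_neg hkl, ← meanD k, ← meanD l]
      have := (indepD k l hkl).integral_mul_eq_mul_integral (intD k).aestronglyMeasurable (intD l).aestronglyMeasurable
      simpa [Pi.mul_apply] using this
  have hMsum : ∑ k ∈ U, μD k = m * (∫ ω, A 0 ω ∂ℙ) + n * (∫ ω, C 0 ω ∂ℙ) := by
    rw [hU, Finset.sum_disjSum]
    simp [hμD, mul_comm]
  have hmean : ∫ ω, (∑ k ∈ U, D k ω) ∂ℙ = ∑ k ∈ U, μD k := by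
    rw [integral_finset_sum _ (fun k _ => intD k)]
    exact Finset.sum_congr rfl fun k _ => meanD k
  constructor
  · simp only [hg_eq]
    rw [hmean, hMsum]
  · simp only [hg_eq]
    have hsq : ∀ ω, (∑ k ∈ U, D k ω) ^ 2 = ∑ k ∈ U, ∑ l ∈ U, D k ω * D l ω := by
      intro ω
      rw [pow_two, Finset.sum_mul_sum]
    simp only [hsq]
    rw [integral_finset_sum _ (fun k _ => integrable_finset_sum _ (fun l _ => prodInt k l))]
    have : ∀ k ∈ U, ∫ ω, (∑ l ∈ U, D k ω * D l ω) ∂ℙ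
        = μD k * (∑ l ∈ U, μD l) + (sD k - μD k * μD k) := by
      intro k hk
      rw [integral_finset_sum _ (fun l _ => prodInt k l)]
      have e1 : ∀ l ∈ U, ∫ ω, D k ω * D l ω ∂ℙ
          = μD k * μD l + (if k = l then sD k - μD k * μD l else 0) := by
        intro l _
        rw [Eprod k l]
        split_ifs with h
        · subst h; ring
        · ring
      rw [Finset.sum_congr rfl e1, Finset.sum_add_distrib, ← Finset.mul_sum,
        Finset.sum_ite_eq U k (fun l => sD k - μD k * μD l), if_pos hk]
    rw [Finset.sum_congr rfl this, Finset.sum_add_distrib, ← Finset.sum_mul, hMsum]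
    have hdiag : ∑ k ∈ U, (sD k - μD k * μD k)
        = m * ((∫ ω, A 0 ω ^ 2 ∂ℙ) - (∫ ω, A 0 ω ∂ℙ) ^ 2)
          + n * ((∫ ω, C 0 ω ^ 2 ∂ℙ) - (∫ ω, C 0 ω ∂ℙ) ^ 2) := by
      rw [hU, Finset.sum_disjSum]
      simp [hμD, hsD, pow_two, mul_comm]
      ring
    rw [hdiag]
    ring

lemma key (t : ℕ) (q0 q1 : ℝ)
    (N0 N1 : Ω → ℕ) (hN0 : Measurable N0) (hN1 : Measurable N1)
    (A C : ℕ → Ω → ℝ)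
    (hAm : ∀ i, Measurable (A i)) (hCm : ∀ i, Measurable (C i))
    (hApos : ∀ i, ∀ᵐ ω ∂ℙ, 0 < A i ω) (hCpos : ∀ i, ∀ᵐ ω ∂ℙ, 0 < C i ω)
    (hAid : ∀ i, IdentDistrib (A i) (A 0) ℙ ℙ) (hCid : ∀ i, IdentDistrib (C i) (C 0) ℙ ℙ)
    (hA2 : Integrable (fun ω => A 0 ω ^ 2) ℙ) (hC2 : Integrable (fun ω => C 0 ω ^ 2) ℙ)
    (hAA : ∀ i j, i ≠ j → IndepFun (A i) (A j) ℙ)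
    (hCC : ∀ i j, i ≠ j → IndepFun (C i) (C j) ℙ)
    (hAC : ∀ i j, IndepFun (A i) (C j) ℙ)
    (hNg : ∀ n m : ℕ, IndepFun (fun ω => ((N0 ω : ℝ), (N1 ω : ℝ)))
      (fun ω => ∑ i ∈ Finset.range m, A i ω + ∑ i ∈ Finset.range n, C i ω) ℙ)
    (hpmf : ∀ b0 b1 : ℕ, (ℙ {ω | N0 ω = b0 ∧ N1 ω = b1}).toReal =
      if b0 + b1 ≤ t then W t q0 q1 (1 - (q0 + q1)) b0 b1 else 0) :
    variance (fun ω => ∑ i ∈ Finset.range (N1 ω), A i ω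
        + ∑ i ∈ Finset.range (N0 ω), C i ω) ℙ
      = t * (q1 * (∫ ω, A 0 ω ^ 2 ∂ℙ) + q0 * (∫ ω, C 0 ω ^ 2 ∂ℙ)
          - (q1 * (∫ ω, A 0 ω ∂ℙ) + q0 * (∫ ω, C 0 ω ∂ℙ)) ^ 2) := by
  classical
  have hs1 : q0 + q1 + (1 - (q0 + q1)) = 1 := by ring
  set z := 1 - (q0 + q1) with hz
  set μA := ∫ ω, A 0 ω ∂ℙ with hμA
  set mA := ∫ ω, A 0 ω ^ 2 ∂ℙ with hmA
  set μC := ∫ ω, C 0 ω ∂ℙ with hμC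
  set mC := ∫ ω, C 0 ω ^ 2 ∂ℙ with hmC
  set S : Ω → ℝ := fun ω => ∑ i ∈ Finset.range (N1 ω), A i ω
      + ∑ i ∈ Finset.range (N0 ω), C i ω with hSdef
  set g : ℕ × ℕ → Ω → ℝ := fun p ω => ∑ i ∈ Finset.range p.2, A i ω
      + ∑ i ∈ Finset.range p.1, C i ω with hgdef
  have memA0 : MemLp (A 0) 2 ℙ :=
    (memLp_two_iff_integrable_sq (hAm 0).aestronglyMeasurable).2 hA2
  have memC0 : MemLp (C 0) 2 ℙ :=
    (memLp_two_iff_integrable_sq (hCm 0).aestronglyMeasurable).2 hC2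
  have memA : ∀ i, MemLp (A i) 2 ℙ := fun i => (hAid i).symm.memLp_snd memA0
  have memC : ∀ i, MemLp (C i) 2 ℙ := fun i => (hCid i).symm.memLp_snd memC0
  have memg : ∀ p : ℕ × ℕ, MemLp (g p) 2 ℙ := by
    intro p
    have h := (memLp_finset_sum' (Finset.range p.2) (fun i _ => memA i)).add
      (memLp_finset_sum' (Finset.range p.1) (fun i _ => memC i))
    have he : g p = (∑ i ∈ Finset.range p.2, A i) + (∑ i ∈ Finset.range p.1, C i) := by
      funext ω
      simp [Finset.sum_apply]
      rfl
    rwa [he]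
  have intg : ∀ p, Integrable (g p) ℙ := fun p => (memg p).integrable one_le_two
  have intg2 : ∀ p, Integrable (fun ω => g p ω ^ 2) ℙ := fun p => (memg p).integrable_sq
  have hgmeas : ∀ p, Measurable (g p) := fun p =>
    (Finset.measurable_sum _ (fun i _ => hAm i)).add
      (Finset.measurable_sum _ (fun i _ => hCm i))
  -- measurability of S
  have hSmeas : Measurable S := by
    have hF : Measurable (fun q : Ω × (ℕ × ℕ) => g q.2 q.1) :=
      measurable_from_prod_countable_left (fun p => hgmeas p)
    have hrep : S = fun ω => (fun q : Ω × (ℕ × ℕ) => g q.2 q.1) (ω, (N0 ω, N1 ω)) := rfl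
    rw [hrep]
    exact hF.comp (measurable_id.prodMk (hN0.prodMk hN1))
  -- events
  set E : ℕ × ℕ → Set Ω := fun p => {ω | N0 ω = p.1 ∧ N1 ω = p.2} with hEdef
  have hEmeas : ∀ p, MeasurableSet (E p) :=
    fun p => (hN0 (measurableSet_singleton p.1)).inter (hN1 (measurableSet_singleton p.2))
  have hEdisj : Pairwise (Function.onFun Disjoint E) := by
    intro p q hpq
    rw [Function.onFun, Set.disjoint_left]
    rintro ω ⟨h0, h1⟩ ⟨h0', h1'⟩
    exact hpq (Prod.ext (h0 ▸ h0' ▸ rfl) (h1 ▸ h1' ▸ rfl))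
  have hEunion : (⋃ p, E p) = Set.univ := by
    ext ω
    simp only [Set.mem_iUnion, Set.mem_univ, iff_true]
    exact ⟨(N0 ω, N1 ω), rfl, rfl⟩
  have hpm : ∀ p : ℕ × ℕ, (ℙ (E p)).toReal =
      if p.1 + p.2 ≤ t then W t q0 q1 z p.1 p.2 else 0 := fun p => hpmf p.1 p.2
  have hEzero : ∀ p : ℕ × ℕ, ¬(p.1 + p.2 ≤ t) → ℙ (E p) = 0 := by
    intro p hp
    have h := hpm p
    rw [if_neg hp] at h
    rcases (ENNReal.toReal_eq_zero_iff _).1 h with h' | h'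
    · exact h'
    · exact absurd h' (measure_ne_top _ _)
  -- a.e. bound on N0, N1
  have hNbound : ∀ᵐ ω ∂ℙ, N0 ω ≤ t ∧ N1 ω ≤ t := by
    rw [ae_iff]
    refine measure_mono_null (fun ω hω => ?_)
      (measure_iUnion_null (ι := {p : ℕ × ℕ // ¬(p.1 + p.2 ≤ t)})
        (s := fun p => E p.1) (fun p => hEzero p.1 p.2))
    simp only [Set.mem_setOf_eq, not_and_or, not_le] at hω
    refine Set.mem_iUnion.2 ⟨⟨(N0 ω, N1 ω), by simp only; omega⟩, rfl, rfl⟩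
  -- MemLp for S
  set Bd : Ω → ℝ := fun ω => ∑ i ∈ Finset.range t, A i ω + ∑ i ∈ Finset.range t, C i ω
    with hBd
  have memBd : MemLp Bd 2 ℙ := by
    have h := (memLp_finset_sum' (Finset.range t) (fun i _ => memA i)).add
      (memLp_finset_sum' (Finset.range t) (fun i _ => memC i))
    have he : Bd = (∑ i ∈ Finset.range t, A i) + (∑ i ∈ Finset.range t, C i) := by
      funext ω
      simp [Finset.sum_apply]
      rfl
    rwa [he]
  have hSmem : MemLp S 2 ℙ := by
    refine memBd.of_le hSmeas.aestronglyMeasurable ?_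
    filter_upwards [hNbound, ae_all_iff.2 hApos, ae_all_iff.2 hCpos] with ω hN hA hC
    have hSnn : 0 ≤ S ω :=
      add_nonneg (Finset.sum_nonneg fun i _ => (hA i).le)
        (Finset.sum_nonneg fun i _ => (hC i).le)
    have hle : S ω ≤ Bd ω := by
      refine add_le_add ?_ ?_
      · exact Finset.sum_le_sum_of_subset_of_nonneg
          (Finset.range_subset_range.2 hN.2) (fun i _ _ => (hA i).le)
      · exact Finset.sum_le_sum_of_subset_of_nonneg
          (Finset.range_subset_range.2 hN.1) (fun i _ _ => (hC i).le)
    calc ‖S ω‖ = S ω := by rw [Real.norm_eq_abs, abs_of_nonneg hSnn]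
      _ ≤ Bd ω := hle
      _ ≤ ‖Bd ω‖ := le_abs_self _
  have hSint : Integrable S ℙ := hSmem.integrable one_le_two
  have hS2int : Integrable (fun ω => S ω ^ 2) ℙ := hSmem.integrable_sq
  -- indicator facts
  have hindint : ∀ p, Integrable ((E p).indicator (fun _ => (1 : ℝ))) ℙ :=
    fun p => (integrable_const (1 : ℝ)).indicator (hEmeas p)
  have hEint : ∀ p, ∫ ω, (E p).indicator (fun _ => (1 : ℝ)) ω ∂ℙ = (ℙ (E p)).toReal := by
    intro p
    rw [integral_indicator (hEmeas p)]
    simp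
    rfl
  have hχ : ∀ p : ℕ × ℕ,
      Measurable (fun v : ℝ × ℝ => if v = ((p.1 : ℝ), (p.2 : ℝ)) then (1 : ℝ) else 0) :=
    fun p => measurable_const.ite (measurableSet_singleton _) measurable_const
  have hcomp : ∀ p : ℕ × ℕ,
      ((fun v : ℝ × ℝ => if v = ((p.1 : ℝ), (p.2 : ℝ)) then (1 : ℝ) else 0)
        ∘ (fun ω => ((N0 ω : ℝ), (N1 ω : ℝ)))) = (E p).indicator (fun _ => (1 : ℝ)) := by
    intro p
    funext ω
    by_cases hω : ω ∈ E p
    · obtain ⟨h0, h1⟩ := hω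
      rw [Set.indicator_of_mem (by exact ⟨h0, h1⟩)]
      simp only [Function.comp_apply]
      rw [if_pos (by rw [h0, h1])]
    · rw [Set.indicator_of_notMem hω]
      simp only [Function.comp_apply]
      rw [if_neg]
      intro hvv
      apply hω
      rw [Prod.mk.injEq] at hvv
      exact ⟨Nat.cast_injective hvv.1, Nat.cast_injective hvv.2⟩
  have hindicInd : ∀ p : ℕ × ℕ,
      IndepFun ((E p).indicator (fun _ => (1 : ℝ))) (g p) ℙ := by
    intro p
    have h := (hNg p.1 p.2).comp (hχ p) measurable_id
    rwa [hcomp p, Function.id_comp] at h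
  have hindicIndSq : ∀ p : ℕ × ℕ,
      IndepFun ((E p).indicator (fun _ => (1 : ℝ))) (fun ω => g p ω ^ 2) ℙ := by
    intro p
    have h := (hNg p.1 p.2).comp (hχ p) (measurable_id.pow_const 2)
    rwa [hcomp p] at h
  -- set integral evaluation
  have mean_p : ∀ p : ℕ × ℕ, ∫ ω in E p, S ω ∂ℙ = (ℙ (E p)).toReal * ∫ ω, g p ω ∂ℙ := by
    intro p
    have heq : Set.EqOn S (g p) (E p) := by
      intro ω hω
      obtain ⟨h0, h1⟩ := hω
      show (∑ i ∈ Finset.range (N1 ω), A i ω + ∑ i ∈ Finset.range (N0 ω), C i ω) = _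
      rw [h0, h1]
    rw [setIntegral_congr_fun (hEmeas p) heq, ← integral_indicator (hEmeas p)]
    have hind : (E p).indicator (g p)
        = fun ω => (E p).indicator (fun _ => (1 : ℝ)) ω * g p ω := by
      funext ω
      by_cases hω : ω ∈ E p <;> simp [Set.indicator, hω]
    rw [hind]
    have h := (hindicInd p).integral_mul_eq_mul_integral (hindint p).aestronglyMeasurable (intg p).aestronglyMeasurable
    rw [show (fun ω => (E p).indicator (fun _ => (1:ℝ)) ω * g p ω)
        = ((E p).indicator (fun _ => (1:ℝ)) * g p) from rfl, h, hEint p]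
  have sq_p : ∀ p : ℕ × ℕ, ∫ ω in E p, S ω ^ 2 ∂ℙ
      = (ℙ (E p)).toReal * ∫ ω, g p ω ^ 2 ∂ℙ := by
    intro p
    have heq : Set.EqOn (fun ω => S ω ^ 2) (fun ω => g p ω ^ 2) (E p) := by
      intro ω hω
      obtain ⟨h0, h1⟩ := hω
      show (∑ i ∈ Finset.range (N1 ω), A i ω + ∑ i ∈ Finset.range (N0 ω), C i ω) ^ 2 = _
      rw [h0, h1]
    rw [setIntegral_congr_fun (hEmeas p) heq, ← integral_indicator (hEmeas p)]
    have hind : (E p).indicator (fun ω => g p ω ^ 2)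
        = fun ω => (E p).indicator (fun _ => (1 : ℝ)) ω * g p ω ^ 2 := by
      funext ω
      by_cases hω : ω ∈ E p <;> simp [Set.indicator, hω]
    rw [hind]
    have h := (hindicIndSq p).integral_mul_eq_mul_integral (hindint p).aestronglyMeasurable (intg2 p).aestronglyMeasurable
    rw [show (fun ω => (E p).indicator (fun _ => (1:ℝ)) ω * g p ω ^ 2)
        = ((E p).indicator (fun _ => (1:ℝ)) * fun ω => g p ω ^ 2) from rfl, h, hEint p]
  -- total decomposition
  have tot : ∀ f : Ω → ℝ, Integrable f ℙ →
      ∫ ω, f ω ∂ℙ = ∑' p : ℕ × ℕ, ∫ ω in E p, f ω ∂ℙ := by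
    intro f hf
    have h1 : ∫ ω, f ω ∂ℙ = ∫ ω in (⋃ p, E p), f ω ∂ℙ := by
      rw [hEunion, Measure.restrict_univ]
    rw [h1, integral_iUnion hEmeas hEdisj hf.integrableOn]
  have fm := fun p : ℕ × ℕ => fixed_moments A C hAm hCm hAid hCid hA2 hC2 hAA hCC hAC p.2 p.1
  -- first moment
  have hSsum : ∫ ω, S ω ∂ℙ = μA * ((t : ℝ) * q1) + μC * ((t : ℝ) * q0) := by
    rw [tot S hSint]
    have hvan : ∀ p : ℕ × ℕ, p ∉ TT t → ∫ ω in E p, S ω ∂ℙ = 0 := by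
      intro p hp
      have hnle : ¬(p.1 + p.2 ≤ t) := fun hle => hp (mem_TT.2 hle)
      rw [mean_p p, show (ℙ (E p)).toReal = 0 from by rw [hpm p, if_neg hnle], zero_mul]
    rw [tsum_eq_sum hvan]
    have hterm : ∀ p ∈ TT t, ∫ ω in E p, S ω ∂ℙ
        = W t q0 q1 z p.1 p.2 * ((p.2 : ℝ) * μA + (p.1 : ℝ) * μC) := by
      intro p hp
      rw [mean_p p, (fm p).1, show (ℙ (E p)).toReal = W t q0 q1 z p.1 p.2 from by
        rw [hpm p, if_pos (mem_TT.1 hp)]]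
    rw [Finset.sum_congr rfl hterm]
    have hsplit : ∀ p ∈ TT t, W t q0 q1 z p.1 p.2 * ((p.2 : ℝ) * μA + (p.1 : ℝ) * μC)
        = μA * ((p.2 : ℝ) * W t q0 q1 z p.1 p.2) + μC * ((p.1 : ℝ) * W t q0 q1 z p.1 p.2) :=
      fun p _ => by ring
    rw [Finset.sum_congr rfl hsplit, Finset.sum_add_distrib, ← Finset.mul_sum, ← Finset.mul_sum,
      I2y t hs1, I2x t hs1]
  -- second moment
  have hS2sum : ∫ ω, S ω ^ 2 ∂ℙ
      = μA ^ 2 * ((t : ℝ) * ((t : ℝ) - 1) * q1 ^ 2)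
        + μC ^ 2 * ((t : ℝ) * ((t : ℝ) - 1) * q0 ^ 2)
        + 2 * μA * μC * ((t : ℝ) * ((t : ℝ) - 1) * q0 * q1)
        + mA * ((t : ℝ) * q1) + mC * ((t : ℝ) * q0) := by
    rw [tot _ hS2int]
    have hvan : ∀ p : ℕ × ℕ, p ∉ TT t → ∫ ω in E p, S ω ^ 2 ∂ℙ = 0 := by
      intro p hp
      have hnle : ¬(p.1 + p.2 ≤ t) := fun hle => hp (mem_TT.2 hle)
      rw [sq_p p, show (ℙ (E p)).toReal = 0 from by rw [hpm p, if_neg hnle], zero_mul]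
    rw [tsum_eq_sum hvan]
    have hterm : ∀ p ∈ TT t, ∫ ω in E p, S ω ^ 2 ∂ℙ
        = W t q0 q1 z p.1 p.2 * (((p.2 : ℝ) * μA + (p.1 : ℝ) * μC) ^ 2
            + (p.2 : ℝ) * (mA - μA ^ 2) + (p.1 : ℝ) * (mC - μC ^ 2)) := by
      intro p hp
      rw [sq_p p, (fm p).2, show (ℙ (E p)).toReal = W t q0 q1 z p.1 p.2 from by
        rw [hpm p, if_pos (mem_TT.1 hp)]]
    rw [Finset.sum_congr rfl hterm]
    have hsplit : ∀ p ∈ TT t,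
        W t q0 q1 z p.1 p.2 * (((p.2 : ℝ) * μA + (p.1 : ℝ) * μC) ^ 2
            + (p.2 : ℝ) * (mA - μA ^ 2) + (p.1 : ℝ) * (mC - μC ^ 2))
          = μA ^ 2 * ((p.2 : ℝ) * ((p.2 : ℝ) - 1) * W t q0 q1 z p.1 p.2)
            + μC ^ 2 * ((p.1 : ℝ) * ((p.1 : ℝ) - 1) * W t q0 q1 z p.1 p.2)
            + (2 * μA * μC) * ((p.1 : ℝ) * (p.2 : ℝ) * W t q0 q1 z p.1 p.2)
            + mA * ((p.2 : ℝ) * W t q0 q1 z p.1 p.2)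
            + mC * ((p.1 : ℝ) * W t q0 q1 z p.1 p.2) :=
      fun p _ => by ring
    rw [Finset.sum_congr rfl hsplit]
    rw [Finset.sum_add_distrib, Finset.sum_add_distrib, Finset.sum_add_distrib,
      Finset.sum_add_distrib]
    rw [← Finset.mul_sum, ← Finset.mul_sum, ← Finset.mul_sum, ← Finset.mul_sum, ← Finset.mul_sum]
    rw [I3y t hs1, I3x t hs1, I4 t hs1, I2y t hs1, I2x t hs1]
  -- conclude
  rw [variance_eq_sub hSmem]
  simp only [Pi.pow_apply]
  rw [hS2sum, hSsum]
  ring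

lemma extract_indep
    (F : Option (ℕ ⊕ ℕ ⊕ ℕ) → Ω → ℝ × ℝ × ℝ)
    (hFmeas : ∀ i, Measurable (F i))
    (hindep : iIndepFun F ℙ)
    (A C : ℕ → Ω → ℝ) (NN : Ω → ℝ × ℝ)
    (e1 e2 : ℕ → ℕ ⊕ ℕ ⊕ ℕ)
    (he11 : ∀ i j, i ≠ j → e1 i ≠ e1 j) (he22 : ∀ i j, i ≠ j → e2 i ≠ e2 j)
    (he12 : ∀ i j, e1 i ≠ e2 j)
    (π1 π2 : ℝ × ℝ × ℝ → ℝ) (hπ1 : Measurable π1) (hπ2 : Measurable π2)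
    (πN : ℝ × ℝ × ℝ → ℝ × ℝ) (hπN : Measurable πN)
    (hA : ∀ i, A i = fun ω => π1 (F (some (e1 i)) ω))
    (hC : ∀ i, C i = fun ω => π2 (F (some (e2 i)) ω))
    (hNN : NN = fun ω => πN (F none ω)) :
    (∀ i j, i ≠ j → IndepFun (A i) (A j) ℙ) ∧ (∀ i j, i ≠ j → IndepFun (C i) (C j) ℙ) ∧
    (∀ i j, IndepFun (A i) (C j) ℙ) ∧
    (∀ n m : ℕ, IndepFun NN
      (fun ω => ∑ i ∈ Finset.range m, A i ω + ∑ i ∈ Finset.range n, C i ω) ℙ) := by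
  classical
  refine ⟨?_, ?_, ?_, ?_⟩
  · intro i j hij
    rw [hA i, hA j]
    exact (hindep.indepFun (show (some (e1 i) : Option (ℕ ⊕ ℕ ⊕ ℕ)) ≠ some (e1 j) by
      simpa using he11 i j hij)).comp hπ1 hπ1
  · intro i j hij
    rw [hC i, hC j]
    exact (hindep.indepFun (show (some (e2 i) : Option (ℕ ⊕ ℕ ⊕ ℕ)) ≠ some (e2 j) by
      simpa using he22 i j hij)).comp hπ2 hπ2
  · intro i j
    rw [hA i, hC j]
    exact (hindep.indepFun (show (some (e1 i) : Option (ℕ ⊕ ℕ ⊕ ℕ)) ≠ some (e2 j) by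
      simpa using he12 i j)).comp hπ1 hπ2
  · intro n m
    set T : Finset (Option (ℕ ⊕ ℕ ⊕ ℕ)) :=
      (Finset.range m).image (fun i => some (e1 i))
        ∪ (Finset.range n).image (fun i => some (e2 i)) with hT
    have hdisjT : Disjoint ({none} : Finset (Option (ℕ ⊕ ℕ ⊕ ℕ))) T := by
      rw [Finset.disjoint_left]
      intro a ha hat
      rw [Finset.mem_singleton] at ha
      subst ha
      rw [hT, Finset.mem_union] at hat
      rcases hat with h | h <;>
        · obtain ⟨i, _, hi⟩ := Finset.mem_image.1 h
          simp at hi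
    have base := hindep.indepFun_finset {none} T hdisjT hFmeas
    have hmemL : none ∈ ({none} : Finset (Option (ℕ ⊕ ℕ ⊕ ℕ))) := Finset.mem_singleton_self _
    set φL : ((i : ({none} : Finset (Option (ℕ ⊕ ℕ ⊕ ℕ)))) → ℝ × ℝ × ℝ) → ℝ × ℝ :=
      fun v => πN (v ⟨none, hmemL⟩) with hφL
    set ext : ((i : T) → ℝ × ℝ × ℝ) → (ℕ ⊕ ℕ ⊕ ℕ) → ℝ × ℝ × ℝ :=
      fun v j => if h : some j ∈ T then v ⟨some j, h⟩ else 0 with hext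
    have hextm : ∀ j, Measurable (fun v => ext v j) := by
      intro j
      by_cases h : some j ∈ T
      · simp only [hext, dif_pos h]
        exact measurable_pi_apply _
      · simp only [hext, dif_neg h]
        exact measurable_const
    set φR : ((i : T) → ℝ × ℝ × ℝ) → ℝ :=
      fun v => ∑ i ∈ Finset.range m, π1 (ext v (e1 i))
        + ∑ i ∈ Finset.range n, π2 (ext v (e2 i)) with hφR
    have hφLm : Measurable φL := hπN.comp (measurable_pi_apply _)
    have hφRm : Measurable φR := by
      refine Measurable.add ?_ ?_
      · exact Finset.measurable_sum _ (fun i _ => hπ1.comp (hextm (e1 i)))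
      · exact Finset.measurable_sum _ (fun i _ => hπ2.comp (hextm (e2 i)))
    have hcomp := base.comp hφLm hφRm
    have hL : φL ∘ (fun a (i : ({none} : Finset (Option (ℕ ⊕ ℕ ⊕ ℕ)))) => F i a) = NN := by
      funext ω
      rw [hNN]
      rfl
    have hR : φR ∘ (fun a (i : T) => F i a)
        = fun ω => ∑ i ∈ Finset.range m, A i ω + ∑ i ∈ Finset.range n, C i ω := by
      funext ω
      simp only [Function.comp_apply, hφR]
      congr 1
      · refine Finset.sum_congr rfl fun i hi => ?_
        have hmem : some (e1 i) ∈ T := by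
          rw [hT, Finset.mem_union]
          exact Or.inl (Finset.mem_image.2 ⟨i, hi, rfl⟩)
        rw [hext]
        simp only [dif_pos hmem]
        rw [hA i]
      · refine Finset.sum_congr rfl fun i hi => ?_
        have hmem : some (e2 i) ∈ T := by
          rw [hT, Finset.mem_union]
          exact Or.inr (Finset.mem_image.2 ⟨i, hi, rfl⟩)
        rw [hext]
        simp only [dif_pos hmem]
        rw [hC i]
    rwa [hL, hR] at hcomp

end Prob

end CompoundMult


/-- Corollary 3 ii: the variances of `S1` and `S2` in the compound
multinomial model, provided the claim sizes have finite second moments. -/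
theorem variance_of_compound_multinomial
    {Ω : Type*} [MeasureSpace Ω] [IsProbabilityMeasure (ℙ : Measure Ω)]
    (t : ℕ) (p0 p1 p2 : ℝ) (hp0 : 0 ≤ p0) (hp1 : 0 ≤ p1) (hp2 : 0 ≤ p2)
    (hp : p0 + p1 + p2 ≤ 1)
    (B0 B1 B2 : Ω → ℕ) (hmult : IsMultinomial t p0 p1 p2 B0 B1 B2)
    (Y1 Y2 Y3 Y4 : ℕ → Ω → ℝ)
    (hmeas : ∀ i, Measurable (Y1 i) ∧ Measurable (Y2 i) ∧ Measurable (Y3 i) ∧ Measurable (Y4 i))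
    (hpos : ∀ i, (∀ᵐ ω ∂ℙ, 0 < Y1 i ω) ∧ (∀ᵐ ω ∂ℙ, 0 < Y2 i ω) ∧
      (∀ᵐ ω ∂ℙ, 0 < Y3 i ω) ∧ (∀ᵐ ω ∂ℙ, 0 < Y4 i ω))
    (hid1 : ∀ i, IdentDistrib (Y1 i) (Y1 0) ℙ ℙ)
    (hid2 : ∀ i, IdentDistrib (Y2 i) (Y2 0) ℙ ℙ)
    (hid34 : ∀ i, IdentDistrib (fun ω => (Y3 i ω, Y4 i ω)) (fun ω => (Y3 0 ω, Y4 0 ω)) ℙ ℙ)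
    (hindep : iIndepFun
      (fun i : Option (ℕ ⊕ ℕ ⊕ ℕ) => (match i with
        | none => fun ω => ((B0 ω : ℝ), (B1 ω : ℝ), (B2 ω : ℝ))
        | some (.inl i) => fun ω => (Y1 i ω, 0, 0)
        | some (.inr (.inl i)) => fun ω => (Y2 i ω, 0, 0)
        | some (.inr (.inr i)) => fun ω => (Y3 i ω, Y4 i ω, 0) : Ω → ℝ × ℝ × ℝ)) ℙ)
    (hint1 : Integrable (fun ω => Y1 0 ω ^ 2) ℙ) (hint2 : Integrable (fun ω => Y2 0 ω ^ 2) ℙ)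
    (hint3 : Integrable (fun ω => Y3 0 ω ^ 2) ℙ) (hint4 : Integrable (fun ω => Y4 0 ω ^ 2) ℙ) :
    variance (fun ω => ∑ i ∈ Finset.range (B1 ω), Y1 i ω +
        ∑ i ∈ Finset.range (B0 ω), Y3 i ω) ℙ =
      t * (p1 * (∫ ω, Y1 0 ω ^ 2 ∂ℙ) + p0 * (∫ ω, Y3 0 ω ^ 2 ∂ℙ) -
        (p1 * (∫ ω, Y1 0 ω ∂ℙ) + p0 * (∫ ω, Y3 0 ω ∂ℙ)) ^ 2) ∧
    variance (fun ω => ∑ i ∈ Finset.range (B2 ω), Y2 i ω +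
        ∑ i ∈ Finset.range (B0 ω), Y4 i ω) ℙ =
      t * (p2 * (∫ ω, Y2 0 ω ^ 2 ∂ℙ) + p0 * (∫ ω, Y4 0 ω ^ 2 ∂ℙ) -
        (p2 * (∫ ω, Y2 0 ω ∂ℙ) + p0 * (∫ ω, Y4 0 ω ∂ℙ)) ^ 2) := by
  classical
  obtain ⟨hB0, hB1, hB2, hpmf3⟩ := hmult
  set F : Option (ℕ ⊕ ℕ ⊕ ℕ) → Ω → ℝ × ℝ × ℝ := (fun i : Option (ℕ ⊕ ℕ ⊕ ℕ) =>
    (match i with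
      | none => fun ω => ((B0 ω : ℝ), (B1 ω : ℝ), (B2 ω : ℝ))
      | some (.inl i) => fun ω => (Y1 i ω, 0, 0)
      | some (.inr (.inl i)) => fun ω => (Y2 i ω, 0, 0)
      | some (.inr (.inr i)) => fun ω => (Y3 i ω, Y4 i ω, 0) : Ω → ℝ × ℝ × ℝ)) with hF
  have hFindep : iIndepFun F ℙ := hindep
  have hcast : Measurable (fun n : ℕ => (n : ℝ)) := measurable_from_top
  have hFmeas : ∀ i, Measurable (F i) := by
    rintro (_ | (i | i | i))
    · exact (hcast.comp hB0).prodMk ((hcast.comp hB1).prodMk (hcast.comp hB2))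
    · exact (hmeas i).1.prodMk (measurable_const.prodMk measurable_const)
    · exact (hmeas i).2.1.prodMk (measurable_const.prodMk measurable_const)
    · exact (hmeas i).2.2.1.prodMk ((hmeas i).2.2.2.prodMk measurable_const)
  have hid3 : ∀ i, IdentDistrib (Y3 i) (Y3 0) ℙ ℙ := fun i =>
    (hid34 i).comp measurable_fst
  have hid4 : ∀ i, IdentDistrib (Y4 i) (Y4 0) ℙ ℙ := fun i =>
    (hid34 i).comp measurable_snd
  constructor
  · obtain ⟨hAA, hCC, hAC, hNg⟩ := CompoundMult.extract_indep F hFmeas hFindep Y1 Y3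
      (fun ω => ((B0 ω : ℝ), (B1 ω : ℝ)))
      Sum.inl (fun i => Sum.inr (Sum.inr i))
      (fun i j h => by simpa using h) (fun i j h => by simpa using h)
      (fun i j => by simp)
      (fun v => v.1) (fun v => v.1) measurable_fst measurable_fst
      (fun v => (v.1, v.2.1)) (measurable_fst.prodMk (measurable_fst.comp measurable_snd))
      (fun i => rfl) (fun i => rfl) rfl
    have hpmf1 : ∀ b0 b1 : ℕ, (ℙ {ω | B0 ω = b0 ∧ B1 ω = b1}).toReal =
        if b0 + b1 ≤ t then CompoundMult.W t p0 p1 (1 - (p0 + p1)) b0 b1 else 0 := by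
      intro b0 b1
      have h := CompoundMult.marginal t p0 p1 p2 (1 - (p0 + p1 + p2)) B0 B1 B2 hB0 hB1 hB2
        hpmf3 b0 b1
      rw [h, show p2 + (1 - (p0 + p1 + p2)) = 1 - (p0 + p1) from by ring]
    exact CompoundMult.key t p0 p1 B0 B1 hB0 hB1 Y1 Y3
      (fun i => (hmeas i).1) (fun i => (hmeas i).2.2.1)
      (fun i => (hpos i).1) (fun i => (hpos i).2.2.1)
      hid1 hid3 hint1 hint3 hAA hCC hAC hNg hpmf1
  · obtain ⟨hAA, hCC, hAC, hNg⟩ := CompoundMult.extract_indep F hFmeas hFindep Y2 Y4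
      (fun ω => ((B0 ω : ℝ), (B2 ω : ℝ)))
      (fun i => Sum.inr (Sum.inl i)) (fun i => Sum.inr (Sum.inr i))
      (fun i j h => by simpa using h) (fun i j h => by simpa using h)
      (fun i j => by simp)
      (fun v => v.1) (fun v => v.2.1) measurable_fst (measurable_fst.comp measurable_snd)
      (fun v => (v.1, v.2.2)) (measurable_fst.prodMk (measurable_snd.comp measurable_snd))
      (fun i => rfl) (fun i => rfl) rfl
    have hpmf3' : ∀ b0 b1 b2 : ℕ, (ℙ {ω | B0 ω = b0 ∧ B2 ω = b1 ∧ B1 ω = b2}).toReal =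
        if b0 + b1 + b2 ≤ t then
          (Nat.factorial t : ℝ) /
            ((Nat.factorial b0 : ℝ) * (Nat.factorial b1 : ℝ) * (Nat.factorial b2 : ℝ) *
              (Nat.factorial (t - (b0 + b1 + b2)) : ℝ)) *
            (p0 ^ b0 * p2 ^ b1 * p1 ^ b2 * (1 - (p0 + p1 + p2)) ^ (t - (b0 + b1 + b2)))
        else 0 := by
      intro b0 b1 b2
      have hset : {ω | B0 ω = b0 ∧ B2 ω = b1 ∧ B1 ω = b2}
          = {ω | B0 ω = b0 ∧ B1 ω = b2 ∧ B2 ω = b1} := by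
        ext ω; exact ⟨fun ⟨h1, h2, h3⟩ => ⟨h1, h3, h2⟩, fun ⟨h1, h2, h3⟩ => ⟨h1, h3, h2⟩⟩
      rw [hset, hpmf3 b0 b2 b1, show b0 + b2 + b1 = b0 + b1 + b2 from by omega]
      by_cases h : b0 + b1 + b2 ≤ t
      · rw [if_pos h, if_pos h]; ring
      · rw [if_neg h, if_neg h]
    have hpmf2 : ∀ b0 b1 : ℕ, (ℙ {ω | B0 ω = b0 ∧ B2 ω = b1}).toReal =
        if b0 + b1 ≤ t then CompoundMult.W t p0 p2 (1 - (p0 + p2)) b0 b1 else 0 := by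
      intro b0 b1
      have h := CompoundMult.marginal t p0 p2 p1 (1 - (p0 + p1 + p2)) B0 B2 B1 hB0 hB2 hB1
        hpmf3' b0 b1
      rw [h, show p1 + (1 - (p0 + p1 + p2)) = 1 - (p0 + p2) from by ring]
    exact CompoundMult.key t p0 p2 B0 B2 hB0 hB2 Y2 Y4
      (fun i => (hmeas i).2.1) (fun i => (hmeas i).2.2.2)
      (fun i => (hpos i).2.1) (fun i => (hpos i).2.2.2)
      hid2 hid4 hint2 hint4 hAA hCC hAC hNg hpmf2
end
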